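/- Let p be a prime number, ℓ ≥ 1 a natural number, c₁,…,c_ℓ integers, N an integer, and r a natural number not divisible by p. Then for every tuple of integers (x₁,…,x_ℓ), the product C(Σ_{i=1}^{ℓ} c_i·x_i + p·N, r) · ∏_{j=1}^{ℓ} C(x_j - 1, p-1) is congruent to 0 modulo p. -/

import Mathlib

open Finset Polynomial

lemma smeval_descPochhammer_int_prod (m : ℤ) (n : ℕ) :
    (descPochhammer ℤ n).smeval m = ∏ i ∈ Finset.range n, (m - i) := by
  induction n with
  | zero => simp [descPochhammer]
  | succ n ih =>
    rw [descPochhammer_succ_right, Polynomial.smeval_mul, ih, Finset.prod_range_succ]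
    congr 1
    simp [Polynomial.smeval_sub, Polynomial.smeval_natCast]

lemma choose_mod_p_eq (p : ℕ) (hp : p.Prime) (y : ℤ) :
    haveI : Fact p.Prime := ⟨hp⟩
    ((Ring.choose y (p - 1) : ℤ) : ZMod p) =
      - ∏ i ∈ Finset.range (p - 1), ((y : ZMod p) - i) := by
  haveI : Fact p.Prime := ⟨hp⟩
  have h := Ring.descPochhammer_eq_factorial_smul_choose y (p - 1)
  rw [smeval_descPochhammer_int_prod] at h
  rw [nsmul_eq_mul] at h
  have hcast : ((∏ i ∈ Finset.range (p - 1), (y - (i : ℤ)) : ℤ) : ZMod p)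
      = ((((p-1).factorial : ℤ) * Ring.choose y (p - 1) : ℤ) : ZMod p) := by rw [← h]
  push_cast at hcast
  rw [ZMod.wilsons_lemma, neg_one_mul] at hcast
  rw [hcast, neg_neg]

theorem stmt7 (p : ℕ) (hp : p.Prime) (ℓ : ℕ) (hℓ : 1 ≤ ℓ) (c : Fin ℓ → ℤ)
    (N : ℤ) (r : ℕ) (hr : ¬ p ∣ r) (x : Fin ℓ → ℤ) :
    ((Ring.choose (∑ i, c i * x i + (p : ℤ) * N) r *
        ∏ j, Ring.choose (x j - 1) (p - 1) : ℤ) : ZMod p) = 0 := by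
  haveI : Fact p.Prime := ⟨hp⟩
  push_cast
  by_cases hx : ∀ j, (p : ℤ) ∣ x j
  · -- the sum is divisible by p, so the first factor vanishes
    set m : ℤ := ∑ i, c i * x i + (p : ℤ) * N with hm
    have hpm : (p : ℤ) ∣ m := by
      apply dvd_add
      · exact Finset.dvd_sum fun i _ => (hx i).mul_left (c i)
      · exact Dvd.intro N rfl
    have hr1 : 1 ≤ r := Nat.one_le_iff_ne_zero.mpr (by rintro rfl; exact hr (dvd_zero p))
    have habs := Ring.choose_smul_choose m hr1
    rw [Nat.choose_one_right, Ring.choose_one_right] at habs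
    have habs' : (r : ℤ) * Ring.choose m r = m * Ring.choose (m - 1) (r - 1) := by
      have := habs
      push_cast at this
      simpa [nsmul_eq_mul] using this
    have hcast : (r : ZMod p) * ((Ring.choose m r : ℤ) : ZMod p)
        = ((m : ℤ) : ZMod p) * ((Ring.choose (m - 1) (r - 1) : ℤ) : ZMod p) := by
      have := congrArg (fun z : ℤ => (z : ZMod p)) habs'
      push_cast at this
      exact this
    have hm0 : ((m : ℤ) : ZMod p) = 0 :=
      (ZMod.intCast_zmod_eq_zero_iff_dvd m p).mpr hpm
    have hr0 : (r : ZMod p) ≠ 0 := by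
      rw [Ne, ZMod.natCast_eq_zero_iff]; exact hr
    have : ((Ring.choose m r : ℤ) : ZMod p) = 0 := by
      have := hcast
      rw [hm0, zero_mul] at this
      exact (mul_eq_zero.mp this).resolve_left hr0
    rw [this, zero_mul]
  · -- some x j is not divisible by p, so its binomial factor vanishes
    push_neg at hx
    obtain ⟨j, hj⟩ := hx
    have hjz : ((x j : ZMod p)) ≠ 0 := by
      rw [Ne, ZMod.intCast_zmod_eq_zero_iff_dvd]; exact hj
    have hfac : ((Ring.choose (x j - 1) (p - 1) : ℤ) : ZMod p) = 0 := by
      rw [choose_mod_p_eq p hp, neg_eq_zero]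
      apply Finset.prod_eq_zero (i := (x j : ZMod p).val - 1)
      · apply Finset.mem_range.mpr
        have hv : (x j : ZMod p).val < p := ZMod.val_lt _
        have hv0 : (x j : ZMod p).val ≠ 0 := by
          simpa [ZMod.val_eq_zero] using hjz
        omega
      · push_cast
        have hv0 : 1 ≤ (x j : ZMod p).val := Nat.one_le_iff_ne_zero.mpr
          (by simpa [ZMod.val_eq_zero] using hjz)
        rw [Nat.cast_sub hv0]
        have : (((x j : ZMod p).val : ZMod p)) = ((x j : ℤ) : ZMod p) := by
          simp [ZMod.natCast_val, ZMod.cast_id]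
        rw [this]
        push_cast
        ring
    rw [Finset.prod_eq_zero (Finset.mem_univ j) hfac, mul_zero]
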